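/- Every equilibrium of the planar N-vortex problem has vorticities satisfying L = 0. That is, if the positions z_1, …, z_N ∈ ℂ are pairwise distinct, the vorticities Γ_1, …, Γ_N are nonzero reals, and V_n = 0 for every n = 1, …, N, then ∑_{1 ≤ j < k ≤ N} Γ_j Γ_k = 0. -/

import Mathlib

open Finset

/-- Every equilibrium of the planar N-vortex problem has vorticities satisfying L = 0. -/
theorem equilibrium_total_angular_momentum_eq_zero
    (N : ℕ) (Γ : Fin N → ℝ) (z : Fin N → ℂ)
    (hΓ : ∀ n, Γ n ≠ 0) (hz : Function.Injective z)
    (hV : ∀ n : Fin N,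
      ∑ j ∈ Finset.univ.filter (fun j => j ≠ n),
        (Γ j : ℂ) / (starRingEnd ℂ) (z n - z j) = 0) :
    ∑ j : Fin N, ∑ k ∈ Finset.univ.filter (fun k => j < k), Γ j * Γ k = 0 := by
  set g : Fin N → Fin N → ℂ :=
    fun n j => (Γ n : ℂ) * ((Γ j : ℂ) * (starRingEnd ℂ) (z n) / (starRingEnd ℂ) (z n - z j))
    with hg
  -- total weighted sum vanishes
  have h0 : ∑ n : Fin N, ∑ j ∈ Finset.univ.filter (fun j => j ≠ n), g n j = 0 := by
    refine Finset.sum_eq_zero fun n _ => ?_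
    have : ∑ j ∈ Finset.univ.filter (fun j => j ≠ n), g n j
        = (Γ n : ℂ) * (starRingEnd ℂ) (z n) *
          ∑ j ∈ Finset.univ.filter (fun j => j ≠ n), (Γ j : ℂ) / (starRingEnd ℂ) (z n - z j) := by
      rw [Finset.mul_sum]
      refine Finset.sum_congr rfl fun j _ => ?_
      simp [hg]; ring
    rw [this, hV n, mul_zero]
  -- split the off-diagonal sum into lower and upper triangles
  have hsplit : ∀ n : Fin N,
      (Finset.univ.filter (fun j => j ≠ n) : Finset (Fin N))
        = Finset.univ.filter (fun j => j < n) ∪ Finset.univ.filter (fun j => n < j) := by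
    intro n
    ext j
    simp only [Finset.mem_filter, Finset.mem_union, Finset.mem_univ, true_and]
    exact ne_iff_lt_or_gt
  have hdisj : ∀ n : Fin N,
      Disjoint (Finset.univ.filter (fun j => j < n) : Finset (Fin N))
        (Finset.univ.filter (fun j => n < j)) := by
    intro n
    simp only [Finset.disjoint_filter, Finset.mem_filter]
    intro j _ h1 h2
    exact absurd (h1.trans h2) (lt_irrefl j)
  have h1 : ∑ n : Fin N, ∑ j ∈ Finset.univ.filter (fun j => j < n), g n j
      + ∑ n : Fin N, ∑ j ∈ Finset.univ.filter (fun j => n < j), g n j = 0 := by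
    rw [← Finset.sum_add_distrib]
    rw [← h0]
    refine Finset.sum_congr rfl fun n _ => ?_
    rw [hsplit n, Finset.sum_union (hdisj n)]
  -- flip the lower triangle
  have h2 : ∑ n : Fin N, ∑ j ∈ Finset.univ.filter (fun j => j < n), g n j
      = ∑ j : Fin N, ∑ n ∈ Finset.univ.filter (fun n => j < n), g n j := by
    refine Finset.sum_comm' fun x y => ?_
    simp
  have h3 : ∑ j : Fin N, ∑ k ∈ Finset.univ.filter (fun k => j < k), (g k j + g j k) = 0 := by
    simpa [Finset.sum_add_distrib, h2] using h1
  -- pairwise terms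
  have hpair : ∀ j k : Fin N, j ≠ k → g k j + g j k = (Γ j : ℂ) * (Γ k : ℂ) := by
    intro j k hjk
    have hzne : (starRingEnd ℂ) (z j - z k) ≠ 0 := by
      simp only [ne_eq, map_eq_zero, sub_eq_zero]
      exact fun h => hjk (hz h)
    have hkj : (starRingEnd ℂ) (z k - z j) = -(starRingEnd ℂ) (z j - z k) := by
      rw [← map_neg]; ring_nf
    have hsub : (starRingEnd ℂ) (z j) - (starRingEnd ℂ) (z k) = (starRingEnd ℂ) (z j - z k) :=
      (map_sub _ _ _).symm
    have : g k j + g j k = (Γ j : ℂ) * (Γ k : ℂ) *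
        (((starRingEnd ℂ) (z j) - (starRingEnd ℂ) (z k)) / (starRingEnd ℂ) (z j - z k)) := by
      rw [hg]; simp only [hkj]; field_simp
      ring
    rw [this, hsub, div_self hzne, mul_one]
  have h4 : ∑ j : Fin N, ∑ k ∈ Finset.univ.filter (fun k => j < k), ((Γ j : ℂ) * (Γ k : ℂ)) = 0 := by
    rw [← h3]
    refine Finset.sum_congr rfl fun j _ => Finset.sum_congr rfl fun k hk => ?_
    rw [Finset.mem_filter] at hk
    exact (hpair j k (ne_of_lt hk.2)).symm
  have := h4
  push_cast at this
  exact_mod_cast this
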